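/- For integers m,n ≥ 0 and 0 ≤ k ≤ m+n+1, reals p, b, q: (1/k!) d^k/dε^k |_{ε=0} G_{1+εp}^{m,n,m+n+1}(b, b+εq) = G_p^{m,n,k}(b,q), where G is defined by G_ξ^{m,n,j}(x,y) := (1/j!) d^j/dt^j |_{t=0} ∫_0^{x+ty} s^m (1+tξ+s)^n ds. -/

import Mathlib

open Polynomial Finset

/-- The Fang–Lai polynomial G_ξ^{m,n,j}(x,y), defined as the j-th Taylor
coefficient in t at t = 0 of ∫_0^{x+ty} s^m (1+tξ+s)^n ds. -/
noncomputable def G (m n j : ℕ) (ξ x y : ℝ) : ℝ :=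
  iteratedDeriv j (fun t => ∫ s in (0:ℝ)..(x + t * y), s ^ m * (1 + t * ξ + s) ^ n) 0
    / (Nat.factorial j : ℝ)

/-- The explicit polynomial whose evaluation at `t` is the integral. -/
noncomputable def Ppoly (m n : ℕ) (ξ x y : ℝ) : Polynomial ℝ :=
  ∑ i ∈ range (n+1), C ((n.choose i : ℝ) / (m+i+1)) *
    ((C 1 + C ξ * X)^(n-i) * (C x + C y * X)^(m+i+1))

lemma integral_eq (m n : ℕ) (c X : ℝ) :
    (∫ s in (0:ℝ)..X, s^m * (1+c+s)^n)
      = ∑ i ∈ range (n+1), (n.choose i : ℝ)/(m+i+1) * ((1+c)^(n-i) * X^(m+i+1)) := by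
  have h : ∀ s : ℝ, s^m * (1+c+s)^n
      = ∑ i ∈ range (n+1), ((n.choose i : ℝ) * (1+c)^(n-i)) * s^(m+i) := by
    intro s
    have h1 : (1+c+s)^n = (s + (1+c))^n := by ring_nf
    rw [h1, add_pow, Finset.mul_sum]
    refine Finset.sum_congr rfl fun i hi => ?_
    rw [pow_add]; ring
  simp_rw [h]
  rw [intervalIntegral.integral_finset_sum
    (fun i _ => (Continuous.intervalIntegrable (by fun_prop) _ _))]
  refine Finset.sum_congr rfl fun i hi => ?_
  rw [intervalIntegral.integral_const_mul, integral_pow]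
  push_cast
  ring

lemma eval_Ppoly (m n : ℕ) (ξ x y t : ℝ) :
    (Ppoly m n ξ x y).eval t
      = ∑ i ∈ range (n+1), (n.choose i : ℝ)/(m+i+1) * ((1+ξ*t)^(n-i) * (x+y*t)^(m+i+1)) := by
  unfold Ppoly
  simp [eval_finset_sum]
  try ring_nf

lemma eval_iteratedDeriv (P : Polynomial ℝ) (k : ℕ) :
    iteratedDeriv k (fun x => P.eval x) = fun x => (derivative^[k] P).eval x := by
  induction k with
  | zero => simp
  | succ k ih =>
    rw [iteratedDeriv_succ, ih]
    funext x
    rw [Function.iterate_succ_apply']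
    exact Polynomial.deriv _

/-- G as Taylor coefficient of the explicit polynomial. -/
lemma G_eq (m n j : ℕ) (ξ x y : ℝ) :
    G m n j ξ x y = (derivative^[j] (Ppoly m n ξ x y)).eval 0 / (Nat.factorial j : ℝ) := by
  unfold G
  congr 1
  have hfun : (fun t => ∫ s in (0:ℝ)..(x + t * y), s ^ m * (1 + t * ξ + s) ^ n)
      = fun t => (Ppoly m n ξ x y).eval t := by
    funext t
    rw [eval_Ppoly]
    have := integral_eq m n (t*ξ) (x + t*y)
    rw [this]
    refine Finset.sum_congr rfl fun i hi => ?_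
    ring_nf
  rw [hfun, eval_iteratedDeriv]

lemma coeff_linear_pow (a b : ℝ) (j d : ℕ) :
    ((C a + C b * X : Polynomial ℝ)^j).coeff d = (j.choose d : ℝ) * a^(j-d) * b^d := by
  rw [add_pow, finset_sum_coeff]
  have h : ∀ k ∈ range (j+1),
      ((C a ^ k * (C b * X) ^ (j - k) * (j.choose k : Polynomial ℝ)).coeff d)
        = if d = j - k then (j.choose k : ℝ) * a^k * b^(j-k) else 0 := by
    intro k hk
    rw [mul_pow, ← C_pow, ← C_pow, ← C_eq_natCast,
      mul_comm _ ((C ((j.choose k : ℝ)))), ← mul_assoc, ← mul_assoc, ← C_mul, ← C_mul,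
      mul_assoc, coeff_C_mul, coeff_X_pow, mul_ite, mul_one, mul_zero]
  rw [Finset.sum_congr rfl h]
  by_cases hd : d ≤ j
  · rw [Finset.sum_eq_single (j - d)]
    · rw [Nat.sub_sub_self hd, if_pos rfl, Nat.choose_symm hd]
    · intro k hk hne
      rw [if_neg]
      simp only [Finset.mem_range] at hk
      omega
    · intro hmem
      exact absurd (Finset.mem_range.mpr (by omega)) hmem
  · rw [Finset.sum_eq_zero, Nat.choose_eq_zero_of_lt (by omega)]
    · simp
    · intro k hk
      rw [if_neg]
      simp only [Finset.mem_range] at hk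
      omega

lemma coeff_top (m n : ℕ) (ξ x y : ℝ) :
    (Ppoly m n ξ x y).coeff (m+n+1)
      = ∑ i ∈ range (n+1), (n.choose i : ℝ)/(m+i+1) * (ξ^(n-i) * y^(m+i+1)) := by
  unfold Ppoly
  rw [finset_sum_coeff]
  refine Finset.sum_congr rfl fun i hi => ?_
  simp only [Finset.mem_range] at hi
  rw [coeff_C_mul, coeff_mul]
  rw [Finset.sum_eq_single ((n-i), (m+i+1))]
  · rw [coeff_linear_pow, coeff_linear_pow]
    simp only [Nat.sub_self, Nat.choose_self, pow_zero, Nat.cast_one]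
    ring
  · rintro ⟨a1, a2⟩ hab hne
    rw [Finset.HasAntidiagonal.mem_antidiagonal] at hab
    rcases (by omega : a1 > n - i ∨ a2 > m + i + 1 ∨ (a1 = n - i ∧ a2 = m + i + 1)) with h | h | h
    · rw [coeff_linear_pow, Nat.choose_eq_zero_of_lt h]
      simp
    · rw [coeff_linear_pow (x) (y), Nat.choose_eq_zero_of_lt h]
      simp
    · exact absurd (Prod.ext h.1 h.2) hne
  · intro hmem
    exact absurd (Finset.HasAntidiagonal.mem_antidiagonal.mpr (by omega)) hmem

lemma deriv_eval_zero (P : Polynomial ℝ) (N : ℕ) :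
    (derivative^[N] P).eval 0 / (Nat.factorial N : ℝ) = P.coeff N := by
  rw [← coeff_zero_eq_eval_zero, coeff_iterate_derivative]
  simp only [Nat.zero_add, Nat.descFactorial_self, nsmul_eq_mul]
  field_simp

/-- The k-th ε-Taylor coefficient of G_{1+εp}^{m,n,m+n+1}(b, b+εq) equals
G_p^{m,n,k}(b,q). -/
theorem G_taylor_coefficient (m n k : ℕ) (hk : k ≤ m + n + 1) (p b q : ℝ) :
    iteratedDeriv k (fun ε => G m n (m + n + 1) (1 + ε * p) b (b + ε * q)) 0
        / (Nat.factorial k : ℝ)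
      = G m n k p b q := by
  have hfun : (fun ε => G m n (m + n + 1) (1 + ε * p) b (b + ε * q))
      = fun ε => (Ppoly m n p b q).eval ε := by
    funext ε
    rw [G_eq, deriv_eval_zero, coeff_top, eval_Ppoly]
    refine Finset.sum_congr rfl fun i hi => ?_
    ring_nf
  rw [hfun, eval_iteratedDeriv, deriv_eval_zero, G_eq, deriv_eval_zero]
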